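/- Let a > 0. The equation ( 8·(a + 1)·β² − 1 )·cos β + cos(3β) − 4β·sin β = 0 has a unique solution β* in the interval (0, π), and β* is the unique global minimizer over β ∈ (0, π) of the function G(β) = ( a + 1 − sin(2β)/(2β) ) / ( 2·sin²β ); moreover G is strictly decreasing on (0, β*]. -/

import Mathlib

open Filter Topology Set
open Real

noncomputable def mfun (a : ℝ) : ℝ → ℝ :=
  fun β => 2*(a+1) - (Real.sin β/β)^2 - (Real.sin β/β)/Real.cos β

noncomputable def Ffun (a : ℝ) : ℝ → ℝ :=
  fun β => (8*(a+1)*β^2 - 1) * Real.cos β + Real.cos (3*β) - 4*β*Real.sin β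

lemma aux_sin_sub {t : ℝ} (ht : t ∈ Ioo 0 π) : 0 < Real.sin t - t * Real.cos t := by
  have hd : ∀ x : ℝ, HasDerivAt (fun y => Real.sin y - y * Real.cos y) (x * Real.sin x) x := by
    intro x
    have h := (Real.hasDerivAt_sin x).sub ((hasDerivAt_id x).mul (Real.hasDerivAt_cos x))
    simp only [id_eq] at h
    exact h.congr_deriv (by ring)
  have hmono : StrictMonoOn (fun y => Real.sin y - y * Real.cos y) (Icc 0 π) := by
    apply strictMonoOn_of_deriv_pos (convex_Icc 0 π)
    · exact (Continuous.continuousOn (by continuity))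
    · intro x hx
      rw [interior_Icc] at hx
      rw [(hd x).deriv]
      exact mul_pos hx.1 (Real.sin_pos_of_pos_of_lt_pi hx.1 hx.2)
  have := hmono (left_mem_Icc.2 Real.pi_pos.le) ⟨ht.1.le, ht.2.le⟩ ht.1
  simpa using this

lemma aux_R2 {u : ℝ} (hu : u ∈ Ioo 0 (2*π)) : 0 < 2 - 2*Real.cos u - u * Real.sin u := by
  have ht : u/2 ∈ Ioo 0 π := ⟨by linarith [hu.1], by linarith [hu.2]⟩
  have h1 := aux_sin_sub ht
  have h2 : 0 < Real.sin (u/2) := Real.sin_pos_of_pos_of_lt_pi ht.1 ht.2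
  have e1 : Real.cos u = 2 * Real.cos (u/2)^2 - 1 := by
    have := Real.cos_two_mul (u/2); rw [show 2*(u/2) = u by ring] at this; linarith
  have e2 : Real.sin u = 2 * Real.sin (u/2) * Real.cos (u/2) := by
    have := Real.sin_two_mul (u/2); rw [show 2*(u/2) = u by ring] at this; linarith
  have e3 := Real.sin_sq_add_cos_sq (u/2)
  rw [e1, e2]
  nlinarith [mul_pos h2 h1]

lemma aux_R1 {u : ℝ} (hu : u ∈ Ioo 0 (2*π)) : 0 < 2*u - 3*Real.sin u + u * Real.cos u := by
  have hd : ∀ x : ℝ, HasDerivAt (fun y => 2*y - 3*Real.sin y + y * Real.cos y)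
      (2 - 2*Real.cos x - x * Real.sin x) x := by
    intro x
    have h := (((hasDerivAt_id x).const_mul 2).sub ((Real.hasDerivAt_sin x).const_mul 3)).add
      ((hasDerivAt_id x).mul (Real.hasDerivAt_cos x))
    simp only [id_eq] at h
    exact h.congr_deriv (by ring)
  have hmono : StrictMonoOn (fun y => 2*y - 3*Real.sin y + y * Real.cos y) (Icc 0 (2*π)) := by
    apply strictMonoOn_of_deriv_pos (convex_Icc 0 (2*π))
    · exact (Continuous.continuousOn (by continuity))
    · intro x hx
      rw [interior_Icc] at hx
      rw [(hd x).deriv]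
      exact aux_R2 hx
  have := hmono (left_mem_Icc.2 (by positivity)) ⟨hu.1.le, hu.2.le⟩ hu.1
  simpa using this

lemma aux_R {u : ℝ} (hu : u ∈ Ioo 0 (2*π)) : 0 < u^2 + u * Real.sin u + 4*Real.cos u - 4 := by
  have hd : ∀ x : ℝ, HasDerivAt (fun y => y^2 + y*Real.sin y + 4*Real.cos y - 4)
      (2*x - 3*Real.sin x + x * Real.cos x) x := by
    intro x
    have h := (((hasDerivAt_pow 2 x).add ((hasDerivAt_id x).mul (Real.hasDerivAt_sin x))).add
      ((Real.hasDerivAt_cos x).const_mul 4)).sub_const 4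
    simp only [id_eq] at h
    exact h.congr_deriv (by ring)
  have hmono : StrictMonoOn (fun y => y^2 + y*Real.sin y + 4*Real.cos y - 4) (Icc 0 (2*π)) := by
    apply strictMonoOn_of_deriv_pos (convex_Icc 0 (2*π))
    · exact (Continuous.continuousOn (by continuity))
    · intro x hx
      rw [interior_Icc] at hx
      rw [(hd x).deriv]
      exact aux_R1 hx
  have := hmono (left_mem_Icc.2 (by positivity)) ⟨hu.1.le, hu.2.le⟩ hu.1
  simpa using this

lemma aux_S {β : ℝ} (hβ : β ∈ Ioo 0 (π/2)) :
    0 < β^2 + β * Real.sin β * Real.cos β * (1 - 2*Real.sin β^2) - 2*Real.sin β^2 * Real.cos β^2 := by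
  have h4 : (4*β) ∈ Ioo 0 (2*π) := ⟨by linarith [hβ.1], by linarith [hβ.2]⟩
  have hR := aux_R h4
  have e1 : Real.sin (4*β) = 2 * (2*Real.sin β*Real.cos β) * (1 - 2*Real.sin β^2) := by
    rw [show (4:ℝ)*β = 2*(2*β) by ring, Real.sin_two_mul, Real.sin_two_mul, Real.cos_two_mul]
    linear_combination (8*Real.sin β*Real.cos β) * Real.sin_sq_add_cos_sq β
  have e2 : Real.cos (4*β) = 1 - 2*(2*Real.sin β*Real.cos β)^2 := by
    have h1 := Real.cos_two_mul (2*β)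
    have h2 := Real.sin_sq_add_cos_sq (2*β)
    have h3 := Real.sin_two_mul β
    rw [show 2*(2*β) = 4*β by ring] at h1
    rw [h1, ← h3]; linarith [sq_nonneg (Real.sin (2*β))]
  rw [e1, e2] at hR
  nlinarith [hR]

lemma cos_pos_of_Ioo {β : ℝ} (hβ : β ∈ Ioo 0 (π/2)) : 0 < Real.cos β :=
  Real.cos_pos_of_mem_Ioo ⟨by linarith [hβ.1, Real.pi_pos], hβ.2⟩

lemma mfun_hasDeriv (a β : ℝ) (hβ0 : β ≠ 0) (hc : Real.cos β ≠ 0) :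
    HasDerivAt (mfun a)
      (-(β^2 + β * Real.sin β * Real.cos β * (1 - 2*Real.sin β^2)
         - 2*Real.sin β^2 * Real.cos β^2) / (β^3 * Real.cos β^2)) β := by
  have d1 : HasDerivAt (fun x => Real.sin x / x)
      ((Real.cos β * β - Real.sin β * 1)/β^2) β :=
    (Real.hasDerivAt_sin β).div (hasDerivAt_id β) hβ0
  have d2 := d1.pow 2
  have d3 := d1.div (Real.hasDerivAt_cos β) hc
  have hd := ((hasDerivAt_const β (2*(a+1))).sub d2).sub d3
  refine hd.congr_deriv ?_
  have hs := Real.sin_sq_add_cos_sq β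
  norm_num only [Nat.cast_ofNat]
  field_simp
  linear_combination (-β^2 - 2*β*Real.sin β*Real.cos β) * hs

lemma mfun_anti (a : ℝ) : StrictAntiOn (mfun a) (Ioo 0 (π/2)) := by
  apply strictAntiOn_of_deriv_neg (convex_Ioo 0 (π/2))
  · intro x hx
    exact (mfun_hasDeriv a x (ne_of_gt hx.1) (ne_of_gt (cos_pos_of_Ioo hx))).differentiableAt.continuousAt.continuousWithinAt
  · intro x hx
    rw [interior_Ioo] at hx
    rw [(mfun_hasDeriv a x (ne_of_gt hx.1) (ne_of_gt (cos_pos_of_Ioo hx))).deriv]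
    apply div_neg_of_neg_of_pos
    · linarith [aux_S hx]
    · exact mul_pos (pow_pos hx.1 3) (pow_pos (cos_pos_of_Ioo hx) 2)

lemma mfun_exists_zero (a : ℝ) (ha : 0 < a) :
    ∃ βs ∈ Ioo 0 (π/2), mfun a βs = 0 := by
  have T1 : Tendsto (fun x => Real.sin x / x) (𝓝[>] (0:ℝ)) (𝓝 1) := by
    have h := hasDerivAt_iff_tendsto_slope.mp (Real.hasDerivAt_sin 0)
    rw [Real.cos_zero] at h
    have h2 : Tendsto (slope Real.sin 0) (𝓝[>] (0:ℝ)) (𝓝 1) :=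
      h.mono_left (nhdsWithin_mono 0 (fun x hx => Set.mem_compl_singleton_iff.mpr (ne_of_gt hx)))
    apply h2.congr'
    filter_upwards [self_mem_nhdsWithin] with x hx
    simp [slope_def_field, Real.sin_zero]
  have Tc : Tendsto (fun x => Real.cos x) (𝓝[>] (0:ℝ)) (𝓝 1) := by
    have := (Real.continuous_cos.tendsto 0).mono_left (nhdsWithin_le_nhds (s := Ioi (0:ℝ)))
    simpa using this
  have Tm : Tendsto (mfun a) (𝓝[>] (0:ℝ)) (𝓝 (2*a)) := by
    have h2 := (tendsto_const_nhds (x := 2*(a+1)) (f := 𝓝[>] (0:ℝ))).sub (T1.pow 2) |>.sub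
      (T1.div Tc one_ne_zero)
    have : (2*(a+1) - 1^2 - 1/1 : ℝ) = 2*a := by ring
    rw [this] at h2
    exact h2
  have hev : ∀ᶠ β in 𝓝[>] (0:ℝ), 0 < mfun a β :=
    Tm.eventually (eventually_gt_nhds (by linarith))
  set β₂ := Real.arctan (π*(a+1)+1) with hβ₂def
  have hβ₂pos : 0 < β₂ := by
    rw [show (0:ℝ) = Real.arctan 0 by simp [Real.arctan_zero]]
    exact Real.arctan_strictMono (by positivity)
  have hβ₂lt : β₂ < π/2 := Real.arctan_lt_pi_div_two _
  have htan : Real.tan β₂ = π*(a+1)+1 := Real.tan_arctan _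
  have hcos₂ : 0 < Real.cos β₂ := cos_pos_of_Ioo ⟨hβ₂pos, hβ₂lt⟩
  have hmβ₂ : mfun a β₂ < 0 := by
    have e : (Real.sin β₂/β₂)/Real.cos β₂ = Real.tan β₂ / β₂ := by
      rw [Real.tan_eq_sin_div_cos]; ring
    have h1 : 2*(a+1)*β₂ < Real.tan β₂ := by
      rw [htan]
      nlinarith [Real.pi_pos]
    have h2 : 2*(a+1) < Real.tan β₂ / β₂ := by
      rw [lt_div_iff₀ hβ₂pos]; linarith
    have h3 : (0:ℝ) ≤ (Real.sin β₂/β₂)^2 := sq_nonneg _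
    unfold mfun
    rw [e]
    linarith
  have hev2 : ∀ᶠ β in 𝓝[>] (0:ℝ), β ∈ Ioo (0:ℝ) β₂ :=
    Ioo_mem_nhdsGT_of_mem ⟨le_refl 0, hβ₂pos⟩
  obtain ⟨β₁, hβ₁mem, hβ₁pos⟩ := (hev2.and hev).exists
  have hsub : Icc β₁ β₂ ⊆ Ioo 0 (π/2) := fun x hx =>
    ⟨lt_of_lt_of_le hβ₁mem.1 hx.1, lt_of_le_of_lt hx.2 hβ₂lt⟩
  have hcont : ContinuousOn (mfun a) (Icc β₁ β₂) := by
    intro x hx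
    have hx' := hsub hx
    exact (mfun_hasDeriv a x (ne_of_gt hx'.1) (ne_of_gt (cos_pos_of_Ioo hx'))).differentiableAt.continuousAt.continuousWithinAt
  have h0 : (0:ℝ) ∈ Icc (mfun a β₂) (mfun a β₁) := ⟨hmβ₂.le, hβ₁pos.le⟩
  obtain ⟨βs, hβs, hms⟩ := intermediate_value_Icc' hβ₁mem.2.le hcont h0
  exact ⟨βs, hsub hβs, hms⟩

lemma F_eq_m (a β : ℝ) (hβ0 : β ≠ 0) (hc : Real.cos β ≠ 0) :
    Ffun a β = 4*β^2*Real.cos β * mfun a β := by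
  unfold Ffun mfun
  rw [Real.cos_three_mul]
  have hs := Real.sin_sq_add_cos_sq β
  field_simp
  linear_combination (4*Real.cos β) * hs

lemma G_hasDeriv (a β : ℝ) (hβ : β ∈ Ioo 0 π) :
    HasDerivAt (fun x => (a + 1 - Real.sin (2*x)/(2*x)) / (2*Real.sin x^2))
      (-(Ffun a β) / (8*β^2*Real.sin β^3)) β := by
  have hβ0 : β ≠ 0 := ne_of_gt hβ.1
  have hs : 0 < Real.sin β := Real.sin_pos_of_pos_of_lt_pi hβ.1 hβ.2
  have dlin : HasDerivAt (fun x : ℝ => 2*x) 2 β := by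
    simpa using (hasDerivAt_id β).const_mul 2
  have dsin2 : HasDerivAt (fun x => Real.sin (2*x)) (Real.cos (2*β)*2) β := by
    have := (Real.hasDerivAt_sin (2*β)).comp β dlin
    exact this
  have d1 := dsin2.div dlin (by positivity : (2*β) ≠ 0)
  have dN := (hasDerivAt_const β (a+1)).sub d1
  have dD := ((Real.hasDerivAt_sin β).pow 2).const_mul 2
  have dG := dN.div dD (by positivity : (2*Real.sin β^2) ≠ 0)
  refine dG.congr_deriv ?_
  norm_num only [Pi.sub_apply, Pi.div_apply, Pi.pow_apply, Nat.cast_ofNat]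
  unfold Ffun
  rw [Real.cos_three_mul, Real.sin_two_mul, Real.cos_two_mul]
  have hp := Real.sin_sq_add_cos_sq β
  field_simp
  linear_combination (8*Real.cos β) * hp

/-- Optimization of the uniform-sensing-noise asymptotic variance
`G(β) = (a + 1 - sin(2β)/(2β)) / (2 sin²β)` on `(0, π)`: the stationarity
equation `(8(a+1)β² - 1) cos β + cos(3β) - 4β sin β = 0` has a unique solution
`β*` in `(0, π)`, which is the unique global minimizer of `G` on `(0, π)`, and
`G` is strictly decreasing on `(0, β*]`. -/
theorem uniform_asv_optimal_beta
    (a : ℝ) (ha : 0 < a)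
    (G : ℝ → ℝ)
    (hG : ∀ β, G β = (a + 1 - Real.sin (2 * β) / (2 * β))
        / (2 * Real.sin β ^ 2)) :
    ∃ βs ∈ Set.Ioo (0 : ℝ) Real.pi,
      ((8 * (a + 1) * βs ^ 2 - 1) * Real.cos βs + Real.cos (3 * βs)
          - 4 * βs * Real.sin βs = 0) ∧
      (∀ β ∈ Set.Ioo (0 : ℝ) Real.pi,
        (8 * (a + 1) * β ^ 2 - 1) * Real.cos β + Real.cos (3 * β)
          - 4 * β * Real.sin β = 0 → β = βs) ∧
      (∀ β ∈ Set.Ioo (0 : ℝ) Real.pi, β ≠ βs → G βs < G β) ∧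
      StrictAntiOn G (Set.Ioc 0 βs) := by
  have hGfun : G = fun x => (a + 1 - Real.sin (2 * x) / (2 * x))
      / (2 * Real.sin x ^ 2) := funext hG
  subst hGfun
  obtain ⟨βs, hβs, hms⟩ := mfun_exists_zero a ha
  have hβsπ : βs < π := lt_trans hβs.2 (by linarith [Real.pi_pos])
  -- sign of F below βs
  have Fpos : ∀ β ∈ Ioo (0:ℝ) βs, 0 < Ffun a β := by
    intro β hβ
    have hβ' : β ∈ Ioo 0 (π/2) := ⟨hβ.1, lt_trans hβ.2 hβs.2⟩
    have hm : 0 < mfun a β := by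
      have := mfun_anti a hβ' hβs hβ.2
      rw [hms] at this; exact this
    rw [F_eq_m a β (ne_of_gt hβ.1) (ne_of_gt (cos_pos_of_Ioo hβ'))]
    exact mul_pos (mul_pos (mul_pos (by norm_num : (0:ℝ) < 4) (pow_pos hβ.1 2)) (cos_pos_of_Ioo hβ')) hm
  -- sign of F above βs
  have Fneg : ∀ β ∈ Ioo (0:ℝ) π, βs < β → Ffun a β < 0 := by
    intro β hβ hlt
    rcases lt_or_ge β (π/2) with h | h
    · have hβ' : β ∈ Ioo 0 (π/2) := ⟨hβ.1, h⟩
      have hm : mfun a β < 0 := by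
        have := mfun_anti a hβs hβ' hlt
        rw [hms] at this; exact this
      rw [F_eq_m a β (ne_of_gt hβ.1) (ne_of_gt (cos_pos_of_Ioo hβ'))]
      have hc := cos_pos_of_Ioo hβ'
      nlinarith [mul_pos (mul_pos (mul_pos (by norm_num : (0:ℝ) < 4) (pow_pos hβ.1 2)) hc) (neg_pos.mpr hm)]
    · unfold Ffun
      rw [Real.cos_three_mul]
      have hc : Real.cos β ≤ 0 :=
        Real.cos_nonpos_of_pi_div_two_le_of_le h (by linarith [hβ.2, Real.pi_pos])
      have hsβ : 0 < Real.sin β := Real.sin_pos_of_pos_of_lt_pi hβ.1 hβ.2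
      have hβ32 : (3/2:ℝ) ≤ β := by linarith [Real.pi_gt_three]
      have h1 : (0:ℝ) ≤ 8*(a+1)*β^2 - 4 + 4*Real.cos β^2 := by nlinarith
      have h2 : Real.cos β * (8*(a+1)*β^2 - 4 + 4*Real.cos β^2) ≤ 0 :=
        mul_nonpos_of_nonpos_of_nonneg hc h1
      nlinarith [mul_pos hβ.1 hsβ]
  -- F vanishes at βs
  have hFs : Ffun a βs = 0 := by
    rw [F_eq_m a βs (ne_of_gt hβs.1) (ne_of_gt (cos_pos_of_Ioo hβs)), hms]
    ring
  -- strict anti on (0, βs]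
  have SA : StrictAntiOn (fun x => (a + 1 - Real.sin (2 * x) / (2 * x))
      / (2 * Real.sin x ^ 2)) (Ioc 0 βs) := by
    apply strictAntiOn_of_deriv_neg (convex_Ioc 0 βs)
    · intro x hx
      have hx' : x ∈ Ioo 0 π := ⟨hx.1, lt_of_le_of_lt hx.2 hβsπ⟩
      exact (G_hasDeriv a x hx').differentiableAt.continuousAt.continuousWithinAt
    · intro x hx
      rw [interior_Ioc] at hx
      have hx' : x ∈ Ioo 0 π := ⟨hx.1, lt_trans hx.2 hβsπ⟩
      rw [(G_hasDeriv a x hx').deriv]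
      apply div_neg_of_neg_of_pos
      · linarith [Fpos x hx]
      · exact mul_pos (mul_pos (by norm_num : (0:ℝ) < 8) (pow_pos hx'.1 2))
          (pow_pos (Real.sin_pos_of_pos_of_lt_pi hx'.1 hx'.2) 3)
  -- strict mono on [βs, π)
  have SM : StrictMonoOn (fun x => (a + 1 - Real.sin (2 * x) / (2 * x))
      / (2 * Real.sin x ^ 2)) (Ico βs π) := by
    apply strictMonoOn_of_deriv_pos (convex_Ico βs π)
    · intro x hx
      have hx' : x ∈ Ioo 0 π := ⟨lt_of_lt_of_le hβs.1 hx.1, hx.2⟩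
      exact (G_hasDeriv a x hx').differentiableAt.continuousAt.continuousWithinAt
    · intro x hx
      rw [interior_Ico] at hx
      have hx' : x ∈ Ioo 0 π := ⟨lt_trans hβs.1 hx.1, hx.2⟩
      rw [(G_hasDeriv a x hx').deriv]
      apply div_pos
      · linarith [Fneg x hx' hx.1]
      · exact mul_pos (mul_pos (by norm_num : (0:ℝ) < 8) (pow_pos hx'.1 2))
          (pow_pos (Real.sin_pos_of_pos_of_lt_pi hx'.1 hx'.2) 3)
  refine ⟨βs, ⟨hβs.1, hβsπ⟩, ?_, ?_, ?_, SA⟩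
  · exact hFs
  · intro β hβ heq
    have hF : Ffun a β = 0 := heq
    rcases lt_trichotomy β βs with h | h | h
    · exact absurd hF (ne_of_gt (Fpos β ⟨hβ.1, h⟩))
    · exact h
    · exact absurd hF (ne_of_lt (Fneg β hβ h))
  · intro β hβ hne
    rcases lt_or_gt_of_ne hne with h | h
    · exact SA ⟨hβ.1, h.le⟩ ⟨hβs.1, le_refl _⟩ h
    · exact SM ⟨le_refl _, hβsπ⟩ ⟨h.le, hβ.2⟩ h
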